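/- Let f be an L(1,2)-edge labeling of T8 and let S be a unit square. Then the number of triangles of T8 all three of whose edges lie in G_S and whose three edge labels under f form a set of three consecutive integers {c − 1, c, c + 1} (for some c ≥ 1) is at most 8. -/

import Mathlib

/-- The infinite octagonal grid (king graph on `ℤ × ℤ`): distinct vertices are
adjacent iff their Chebyshev distance is `1`. -/
def T8 : SimpleGraph (ℤ × ℤ) where
  Adj u v := u ≠ v ∧ max |u.1 - v.1| |u.2 - v.2| = 1
  symm := by
    constructor
    rintro u v ⟨h1, h2⟩
    refine ⟨h1.symm, ?_⟩
    rw [abs_sub_comm v.1 u.1, abs_sub_comm v.2 u.2]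
    exact h2
  loopless := by constructor; rintro u ⟨h, -⟩; exact h rfl

/-- Two (unordered pairs regarded as) edges share an endpoint. -/
def SharesEndpoint (e1 e2 : Sym2 (ℤ × ℤ)) : Prop := ∃ v, v ∈ e1 ∧ v ∈ e2

/-- Two edges of `T8` are at distance `1`: distinct and sharing an endpoint. -/
def EdgeDist1 (e1 e2 : Sym2 (ℤ × ℤ)) : Prop := e1 ≠ e2 ∧ SharesEndpoint e1 e2

/-- Two edges of `T8` are at distance `2`: distinct, sharing no endpoint, but some
edge of `T8` shares an endpoint with both. -/
def EdgeDist2 (e1 e2 : Sym2 (ℤ × ℤ)) : Prop :=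
  e1 ≠ e2 ∧ ¬ SharesEndpoint e1 e2 ∧
    ∃ e3 ∈ T8.edgeSet, SharesEndpoint e1 e3 ∧ SharesEndpoint e3 e2

/-- `f` is an `L(1,2)`-edge labeling of `T8`: edges at distance `1` get distinct
labels and edges at distance `2` get labels differing by at least `2`. -/
def IsL12 (f : Sym2 (ℤ × ℤ) → ℕ) : Prop :=
  (∀ e1 ∈ T8.edgeSet, ∀ e2 ∈ T8.edgeSet, EdgeDist1 e1 e2 → f e1 ≠ f e2) ∧
  (∀ e1 ∈ T8.edgeSet, ∀ e2 ∈ T8.edgeSet, EdgeDist2 e1 e2 → 2 ≤ |(f e1 : ℤ) - (f e2 : ℤ)|)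

/-- An `L(1,2)`-edge labeling of `T8` with labels in `{0, …, n}`. -/
def IsL12Bounded (n : ℕ) (f : Sym2 (ℤ × ℤ) → ℕ) : Prop :=
  IsL12 f ∧ ∀ e ∈ T8.edgeSet, f e ≤ n

/-- The unit square `S(a,b)`. -/
def unitSquare (a b : ℤ) : Set (ℤ × ℤ) :=
  {(a, b), (a + 1, b), (a, b + 1), (a + 1, b + 1)}

/-- `GS S`: the set of edges of `T8` incident to at least one vertex of `S`. -/
def GS (S : Set (ℤ × ℤ)) : Set (Sym2 (ℤ × ℤ)) :=
  {e | e ∈ T8.edgeSet ∧ ∃ v ∈ S, v ∈ e}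

/-- `Sprime a b`: vertices at Chebyshev distance at most `2` from some vertex of
`S(a,b)` (that is, `S ∪ N(S) ∪ N(N(S))`). -/
def Sprime (a b : ℤ) : Set (ℤ × ℤ) :=
  {u | ∃ v ∈ unitSquare a b, max |u.1 - v.1| |u.2 - v.2| ≤ 2}

/-- Two edges sharing an endpoint `v`, written `e1 = {v, v+d1}` and `e2 = {v, v+d2}`,
are at angle `45°` if exactly one of `d1, d2` has both coordinates nonzero and
`d1 · d2 = 1`. -/
def Angle45 (e1 e2 : Sym2 (ℤ × ℤ)) : Prop :=
  ∃ v d1 d2 : ℤ × ℤ, e1 = s(v, v + d1) ∧ e2 = s(v, v + d2) ∧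
    Xor' (d1.1 ≠ 0 ∧ d1.2 ≠ 0) (d2.1 ≠ 0 ∧ d2.2 ≠ 0) ∧
    d1.1 * d2.1 + d1.2 * d2.2 = 1

/-- An edge is slanting if its endpoints differ in both coordinates. -/
def Slanting (e : Sym2 (ℤ × ℤ)) : Prop :=
  ∃ u v : ℤ × ℤ, e = s(u, v) ∧ u.1 ≠ v.1 ∧ u.2 ≠ v.2

/-- `e, e', e''` form the edge set of a triangle of `T8`. -/
def TriangleEdgeSet (e e' e'' : Sym2 (ℤ × ℤ)) : Prop :=
  ∃ u v w : ℤ × ℤ, T8.Adj u v ∧ T8.Adj v w ∧ T8.Adj u w ∧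
    ({e, e', e''} : Set (Sym2 (ℤ × ℤ))) = {s(u, v), s(v, w), s(u, w)}

/-- A triangle of `T8`: three pairwise adjacent vertices. -/
def IsTriangle (t : Finset (ℤ × ℤ)) : Prop :=
  t.card = 3 ∧ ∀ u ∈ t, ∀ v ∈ t, u ≠ v → T8.Adj u v

/-- The edges of a triangle. -/
def triangleEdges (t : Finset (ℤ × ℤ)) : Set (Sym2 (ℤ × ℤ)) :=
  {e | ∃ u ∈ t, ∃ v ∈ t, u ≠ v ∧ e = s(u, v)}


lemma adj_bounds {u v : ℤ × ℤ} (h : T8.Adj u v) :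
    u.1 - v.1 ≤ 1 ∧ v.1 - u.1 ≤ 1 ∧ u.2 - v.2 ≤ 1 ∧ v.2 - u.2 ≤ 1 := by
  obtain ⟨-, hm⟩ := h
  have h1 : |u.1 - v.1| ≤ 1 := hm ▸ le_max_left _ _
  have h2 : |u.2 - v.2| ≤ 1 := hm ▸ le_max_right _ _
  rw [abs_le] at h1 h2
  omega

lemma third {t : Finset (ℤ × ℤ)} (ht : t.card = 3) {p q : ℤ × ℤ}
    (hp : p ∈ t) (hq : q ∈ t) (hpq : p ≠ q) :
    ∃ w, w ≠ p ∧ w ≠ q ∧ t = {p, q, w} := by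
  obtain ⟨x, y, z, hxy, hxz, hyz, rfl⟩ := Finset.card_eq_three.mp ht
  simp only [Finset.mem_insert, Finset.mem_singleton] at hp hq
  rcases hp with rfl | rfl | rfl <;> rcases hq with rfl | rfl | rfl
  · exact absurd rfl hpq
  · exact ⟨z, Ne.symm hxz, Ne.symm hyz, rfl⟩
  · exact ⟨y, Ne.symm hxy, hyz, by ext e; simp; tauto⟩
  · exact ⟨z, Ne.symm hyz, Ne.symm hxz, by ext e; simp; tauto⟩
  · exact absurd rfl hpq
  · exact ⟨x, hxy, hxz, by ext e; simp; tauto⟩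
  · exact ⟨y, hyz, Ne.symm hxy, by ext e; simp; tauto⟩
  · exact ⟨x, hxz, hxy, by ext e; simp; tauto⟩
  · exact absurd rfl hpq

lemma triEdges (u v w : ℤ × ℤ) (huv : u ≠ v) (huw : u ≠ w) (hvw : v ≠ w) :
    triangleEdges ({u, v, w} : Finset (ℤ × ℤ)) =
      ({s(u, v), s(u, w), s(v, w)} : Set (Sym2 (ℤ × ℤ))) := by
  ext e
  simp only [triangleEdges, Set.mem_setOf_eq, Finset.mem_insert, Finset.mem_singleton,
    Set.mem_insert_iff, Set.mem_singleton_iff]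
  constructor
  · rintro ⟨x, hx, y, hy, hxy, rfl⟩
    rcases hx with rfl | rfl | rfl <;> rcases hy with rfl | rfl | rfl <;>
      simp_all [Sym2.eq_iff]
  · rintro (rfl | rfl | rfl)
    · exact ⟨u, Or.inl rfl, v, Or.inr (Or.inl rfl), huv, rfl⟩
    · exact ⟨u, Or.inl rfl, w, Or.inr (Or.inr rfl), huw, rfl⟩
    · exact ⟨v, Or.inr (Or.inl rfl), w, Or.inr (Or.inr rfl), hvw, rfl⟩

lemma no_three_subset_pair {α : Type*} [Inhabited α] {B : Set α}
    (h : ∀ x ∈ B, ∀ y ∈ B, ∀ z ∈ B, x = y ∨ x = z ∨ y = z) :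
    ∃ x y, B ⊆ {x, y} := by
  by_cases hB : B.Nontrivial
  · obtain ⟨x, hx, y, hy, hxy⟩ := hB
    refine ⟨x, y, fun z hz => ?_⟩
    rcases h z hz x hx y hy with h' | h' | h'
    · exact Or.inl h'
    · exact Or.inr h'
    · exact absurd h' hxy
  · rw [Set.not_nontrivial_iff] at hB
    by_cases hne : B.Nonempty
    · obtain ⟨x, hx⟩ := hne
      exact ⟨x, x, fun z hz => Or.inl (hB hz hx)⟩
    · exact ⟨default, default, fun z hz => absurd ⟨z, hz⟩ hne⟩

lemma d1_ne (f : Sym2 (ℤ × ℤ) → ℕ) (hf : IsL12 f) {x y w : ℤ × ℤ}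
    (hxy : T8.Adj x y) (hxw : T8.Adj x w) (hne : y ≠ w) :
    f s(x,y) ≠ f s(x,w) := by
  refine hf.1 _ (T8.mem_edgeSet.mpr hxy) _ (T8.mem_edgeSet.mpr hxw)
    ⟨?_, x, Sym2.mem_mk_left x y, Sym2.mem_mk_left x w⟩
  intro h
  rcases Sym2.eq_iff.mp h with ⟨-, h2⟩ | ⟨-, h2⟩
  · exact hne h2
  · exact hxy.ne h2.symm

lemma d2_ge (f : Sym2 (ℤ × ℤ) → ℕ) (hf : IsL12 f) {u v wi wj : ℤ × ℤ}
    (huv : T8.Adj u v) (hiu : T8.Adj u wi) (hjv : T8.Adj v wj)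
    (hiv : wi ≠ v) (hju : wj ≠ u) (hij : wi ≠ wj) :
    2 ≤ (f s(u,wi) : ℤ) - f s(v,wj) ∨ 2 ≤ (f s(v,wj) : ℤ) - f s(u,wi) := by
  have hns : ¬ SharesEndpoint s(u,wi) s(v,wj) := by
    rintro ⟨z, hz1, hz2⟩
    rw [Sym2.mem_iff] at hz1 hz2
    rcases hz1 with rfl | rfl <;> rcases hz2 with rfl | rfl
    · exact huv.ne rfl
    · exact hju rfl.symm
    · exact hiv rfl
    · exact hij rfl
  have habs := hf.2 _ (T8.mem_edgeSet.mpr hiu) _ (T8.mem_edgeSet.mpr hjv)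
    ⟨fun he => hns ⟨u, Sym2.mem_mk_left u wi, he ▸ Sym2.mem_mk_left u wi⟩, hns,
      s(u,v), T8.mem_edgeSet.mpr huv,
      ⟨u, Sym2.mem_mk_left u wi, Sym2.mem_mk_left u v⟩,
      ⟨v, Sym2.mem_mk_right u v, Sym2.mem_mk_left v wj⟩⟩
  rcases le_abs.mp habs with h | h
  · left; omega
  · right; omega

lemma tri_consec (f : Sym2 (ℤ × ℤ) → ℕ) (hf : IsL12 f) (u v w : ℤ × ℤ)
    (huv : T8.Adj u v) (huw : T8.Adj u w) (hvw : T8.Adj v w)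
    (hc : ∃ c : ℕ, 1 ≤ c ∧ f '' triangleEdges ({u, v, w} : Finset (ℤ × ℤ)) =
      {c - 1, c, c + 1}) :
    (f s(u,w) + 1 = f s(u,v) ∧ f s(v,w) + 2 = f s(u,v)) ∨
    (f s(u,w) + 2 = f s(u,v) ∧ f s(v,w) + 1 = f s(u,v)) ∨
    (f s(u,w) + 1 = f s(u,v) ∧ f s(v,w) = f s(u,v) + 1) ∨
    (f s(v,w) + 1 = f s(u,v) ∧ f s(u,w) = f s(u,v) + 1) ∨
    (f s(u,w) = f s(u,v) + 1 ∧ f s(v,w) = f s(u,v) + 2) ∨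
    (f s(u,w) = f s(u,v) + 2 ∧ f s(v,w) = f s(u,v) + 1) := by
  obtain ⟨c, hc1, himg⟩ := hc
  have hne_uv : u ≠ v := huv.ne
  have hne_uw : u ≠ w := huw.ne
  have hne_vw : v ≠ w := hvw.ne
  rw [triEdges u v w hne_uv hne_uw hne_vw, Set.image_insert_eq, Set.image_insert_eq,
    Set.image_singleton] at himg
  have h1 : f s(u,v) = c - 1 ∨ f s(u,v) = c ∨ f s(u,v) = c + 1 := by
    have : f s(u,v) ∈ ({c - 1, c, c + 1} : Set ℕ) := by rw [← himg]; simp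
    simpa using this
  have h2 : f s(u,w) = c - 1 ∨ f s(u,w) = c ∨ f s(u,w) = c + 1 := by
    have : f s(u,w) ∈ ({c - 1, c, c + 1} : Set ℕ) := by rw [← himg]; simp
    simpa using this
  have h3 : f s(v,w) = c - 1 ∨ f s(v,w) = c ∨ f s(v,w) = c + 1 := by
    have : f s(v,w) ∈ ({c - 1, c, c + 1} : Set ℕ) := by rw [← himg]; simp
    simpa using this
  have d1 : f s(u,v) ≠ f s(u,w) := d1_ne f hf huv huw hne_vw
  have d2 : f s(u,v) ≠ f s(v,w) := by
    have e : s(u,v) = s(v,u) := Sym2.eq_swap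
    rw [e]
    exact d1_ne f hf huv.symm hvw hne_uw
  have d3 : f s(u,w) ≠ f s(v,w) := by
    have e1 : s(u,w) = s(w,u) := Sym2.eq_swap
    have e2 : s(v,w) = s(w,v) := Sym2.eq_swap
    rw [e1, e2]
    exact d1_ne f hf huw.symm hvw.symm hne_uv
  clear himg hf huv huw hvw hne_uv hne_uw hne_vw
  generalize f s(u,v) = m at *
  generalize f s(u,w) = p at *
  generalize f s(v,w) = q at *
  clear u v w
  rcases h1 with rfl | rfl | rfl <;> rcases h2 with rfl | rfl | rfl <;>
    rcases h3 with rfl | rfl | rfl <;> omega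

lemma pairtypes (m a1 b1 a2 b2 : ℕ)
    (P1 : (a1 + 1 = m ∧ b1 + 2 = m) ∨ (a1 + 2 = m ∧ b1 + 1 = m) ∨
      (a1 + 1 = m ∧ b1 = m + 1) ∨ (b1 + 1 = m ∧ a1 = m + 1) ∨
      (a1 = m + 1 ∧ b1 = m + 2) ∨ (a1 = m + 2 ∧ b1 = m + 1))
    (P2 : (a2 + 1 = m ∧ b2 + 2 = m) ∨ (a2 + 2 = m ∧ b2 + 1 = m) ∨
      (a2 + 1 = m ∧ b2 = m + 1) ∨ (b2 + 1 = m ∧ a2 = m + 1) ∨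
      (a2 = m + 1 ∧ b2 = m + 2) ∨ (a2 = m + 2 ∧ b2 = m + 1))
    (H12 : 2 ≤ (a1 : ℤ) - b2 ∨ 2 ≤ (b2 : ℤ) - a1)
    (H21 : 2 ≤ (a2 : ℤ) - b1 ∨ 2 ≤ (b1 : ℤ) - a2)
    (A : a1 ≠ a2) (B : b1 ≠ b2) :
    (a1 + b1 + 3 = 2 * m ∧ a2 + b2 = 2 * m + 3) ∨
    (a1 + b1 = 2 * m + 3 ∧ a2 + b2 + 3 = 2 * m) := by
  rcases P1 with ⟨e1,e2⟩|⟨e1,e2⟩|⟨e1,e2⟩|⟨e1,e2⟩|⟨e1,e2⟩|⟨e1,e2⟩ <;>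
    rcases P2 with ⟨e3,e4⟩|⟨e3,e4⟩|⟨e3,e4⟩|⟨e3,e4⟩|⟨e3,e4⟩|⟨e3,e4⟩ <;> omega

lemma fan (f : Sym2 (ℤ × ℤ) → ℕ) (hf : IsL12 f) (u v w1 w2 w3 : ℤ × ℤ)
    (huv : T8.Adj u v)
    (h1u : T8.Adj u w1) (h1v : T8.Adj v w1)
    (h2u : T8.Adj u w2) (h2v : T8.Adj v w2)
    (h3u : T8.Adj u w3) (h3v : T8.Adj v w3)
    (h12 : w1 ≠ w2) (h13 : w1 ≠ w3) (h23 : w2 ≠ w3)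
    (hc1 : ∃ c : ℕ, 1 ≤ c ∧ f '' triangleEdges ({u, v, w1} : Finset (ℤ × ℤ)) = {c - 1, c, c + 1})
    (hc2 : ∃ c : ℕ, 1 ≤ c ∧ f '' triangleEdges ({u, v, w2} : Finset (ℤ × ℤ)) = {c - 1, c, c + 1})
    (hc3 : ∃ c : ℕ, 1 ≤ c ∧ f '' triangleEdges ({u, v, w3} : Finset (ℤ × ℤ)) = {c - 1, c, c + 1}) :
    False := by
  have P1 := tri_consec f hf u v w1 huv h1u h1v hc1
  have P2 := tri_consec f hf u v w2 huv h2u h2v hc2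
  have P3 := tri_consec f hf u v w3 huv h3u h3v hc3
  have H12 := d2_ge f hf huv h1u h2v (fun h => h1v.ne h.symm) (fun h => h2u.ne h.symm) h12
  have H21 := d2_ge f hf huv h2u h1v (fun h => h2v.ne h.symm) (fun h => h1u.ne h.symm) h12.symm
  have H13 := d2_ge f hf huv h1u h3v (fun h => h1v.ne h.symm) (fun h => h3u.ne h.symm) h13
  have H31 := d2_ge f hf huv h3u h1v (fun h => h3v.ne h.symm) (fun h => h1u.ne h.symm) h13.symm
  have H23 := d2_ge f hf huv h2u h3v (fun h => h2v.ne h.symm) (fun h => h3u.ne h.symm) h23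
  have H32 := d2_ge f hf huv h3u h2v (fun h => h3v.ne h.symm) (fun h => h2u.ne h.symm) h23.symm
  have A12 : f s(u,w1) ≠ f s(u,w2) := d1_ne f hf h1u h2u h12
  have A13 : f s(u,w1) ≠ f s(u,w3) := d1_ne f hf h1u h3u h13
  have A23 : f s(u,w2) ≠ f s(u,w3) := d1_ne f hf h2u h3u h23
  have B12 : f s(v,w1) ≠ f s(v,w2) := d1_ne f hf h1v h2v h12
  have B13 : f s(v,w1) ≠ f s(v,w3) := d1_ne f hf h1v h3v h13
  have B23 : f s(v,w2) ≠ f s(v,w3) := d1_ne f hf h2v h3v h23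
  have Q12 := pairtypes _ _ _ _ _ P1 P2 H12 H21 A12 B12
  have Q13 := pairtypes _ _ _ _ _ P1 P3 H13 H31 A13 B13
  have Q23 := pairtypes _ _ _ _ _ P2 P3 H23 H32 A23 B23
  omega

lemma pair_bound (f : Sym2 (ℤ × ℤ) → ℕ) (hf : IsL12 f) {p q : ℤ × ℤ} (hpq : p ≠ q)
    {t1 t2 t3 : Finset (ℤ × ℤ)}
    (T1 : IsTriangle t1) (T2 : IsTriangle t2) (T3 : IsTriangle t3)
    (C1 : ∃ c : ℕ, 1 ≤ c ∧ f '' triangleEdges t1 = {c - 1, c, c + 1})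
    (C2 : ∃ c : ℕ, 1 ≤ c ∧ f '' triangleEdges t2 = {c - 1, c, c + 1})
    (C3 : ∃ c : ℕ, 1 ≤ c ∧ f '' triangleEdges t3 = {c - 1, c, c + 1})
    (hp1 : p ∈ t1) (hq1 : q ∈ t1) (hp2 : p ∈ t2) (hq2 : q ∈ t2)
    (hp3 : p ∈ t3) (hq3 : q ∈ t3) :
    t1 = t2 ∨ t1 = t3 ∨ t2 = t3 := by
  by_contra hcon
  push_neg at hcon
  obtain ⟨n12, n13, n23⟩ := hcon
  obtain ⟨w1, hw1p, hw1q, ht1⟩ := third T1.1 hp1 hq1 hpq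
  obtain ⟨w2, hw2p, hw2q, ht2⟩ := third T2.1 hp2 hq2 hpq
  obtain ⟨w3, hw3p, hw3q, ht3⟩ := third T3.1 hp3 hq3 hpq
  have hw12 : w1 ≠ w2 := by rintro rfl; exact n12 (ht1.trans ht2.symm)
  have hw13 : w1 ≠ w3 := by rintro rfl; exact n13 (ht1.trans ht3.symm)
  have hw23 : w2 ≠ w3 := by rintro rfl; exact n23 (ht2.trans ht3.symm)
  have hw1m : w1 ∈ t1 := by rw [ht1]; simp
  have hw2m : w2 ∈ t2 := by rw [ht2]; simp
  have hw3m : w3 ∈ t3 := by rw [ht3]; simp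
  rw [ht1] at C1
  rw [ht2] at C2
  rw [ht3] at C3
  exact fan f hf p q w1 w2 w3
    (T1.2 p hp1 q hq1 hpq)
    (T1.2 p hp1 w1 hw1m (Ne.symm hw1p)) (T1.2 q hq1 w1 hw1m (Ne.symm hw1q))
    (T2.2 p hp2 w2 hw2m (Ne.symm hw2p)) (T2.2 q hq2 w2 hw2m (Ne.symm hw2q))
    (T3.2 p hp3 w3 hw3m (Ne.symm hw3p)) (T3.2 q hq3 w3 hw3m (Ne.symm hw3q))
    hw12 hw13 hw23 C1 C2 C3

lemma cover_aux {a b : ℤ} {t : Finset (ℤ × ℤ)} {p q r : ℤ × ℤ}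
    (hp : p ∈ t) (hq : q ∈ t) (hr : r ∈ t)
    (hpq : p ≠ q) (hrp : r ≠ p) (hrq : r ≠ q)
    (harp : T8.Adj r p) (harq : T8.Adj r q)
    (hpsq : p ∈ unitSquare a b) (hqsq : q ∈ unitSquare a b) :
    ((a,b) ∈ t ∧ (a+1,b) ∈ t) ∨ ((a,b+1) ∈ t ∧ (a+1,b+1) ∈ t) ∨
    ((a,b) ∈ t ∧ (a,b+1) ∈ t) ∨ ((a+1,b) ∈ t ∧ (a+1,b+1) ∈ t) := by
  simp only [unitSquare, Set.mem_insert_iff, Set.mem_singleton_iff] at hpsq hqsq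
  obtain ⟨r1, r2⟩ := r
  have b1 := adj_bounds harp
  have b2 := adj_bounds harq
  rcases hpsq with rfl | rfl | rfl | rfl <;> rcases hqsq with rfl | rfl | rfl | rfl <;>
      simp only [Prod.fst, Prod.snd] at b1 b2 <;>
      simp only [ne_eq, Prod.mk.injEq, not_and] at hrp hrq
  · exact absurd rfl hpq
  · exact Or.inl ⟨hp, hq⟩
  · exact Or.inr (Or.inr (Or.inl ⟨hp, hq⟩))
  · -- p = (a,b), q = (a+1,b+1): diagonal
    have : (r1 = a + 1 ∧ r2 = b) ∨ (r1 = a ∧ r2 = b + 1) := by omega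
    rcases this with ⟨rfl, rfl⟩ | ⟨rfl, rfl⟩
    · exact Or.inl ⟨hp, hr⟩
    · exact Or.inr (Or.inr (Or.inl ⟨hp, hr⟩))
  · exact Or.inl ⟨hq, hp⟩
  · exact absurd rfl hpq
  · -- p = (a+1,b), q = (a,b+1): anti-diagonal
    have : (r1 = a ∧ r2 = b) ∨ (r1 = a + 1 ∧ r2 = b + 1) := by omega
    rcases this with ⟨rfl, rfl⟩ | ⟨rfl, rfl⟩
    · exact Or.inl ⟨hr, hp⟩
    · exact Or.inr (Or.inr (Or.inr ⟨hp, hr⟩))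
  · exact Or.inr (Or.inr (Or.inr ⟨hp, hq⟩))
  · exact Or.inr (Or.inr (Or.inl ⟨hq, hp⟩))
  · -- p = (a,b+1), q = (a+1,b): anti-diagonal reversed
    have : (r1 = a ∧ r2 = b) ∨ (r1 = a + 1 ∧ r2 = b + 1) := by omega
    rcases this with ⟨rfl, rfl⟩ | ⟨rfl, rfl⟩
    · exact Or.inl ⟨hr, hq⟩
    · exact Or.inr (Or.inr (Or.inr ⟨hq, hr⟩))
  · exact absurd rfl hpq
  · exact Or.inr (Or.inl ⟨hp, hq⟩)
  · -- p = (a+1,b+1), q = (a,b): diagonal reversed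
    have : (r1 = a + 1 ∧ r2 = b) ∨ (r1 = a ∧ r2 = b + 1) := by omega
    rcases this with ⟨rfl, rfl⟩ | ⟨rfl, rfl⟩
    · exact Or.inl ⟨hq, hr⟩
    · exact Or.inr (Or.inr (Or.inl ⟨hq, hr⟩))
  · exact Or.inr (Or.inr (Or.inr ⟨hq, hp⟩))
  · exact Or.inr (Or.inl ⟨hq, hp⟩)
  · exact absurd rfl hpq


/-- The number of triangles of `T8` with all edges in `G_S` whose
edge labels form a set `{c-1, c, c+1}` of three consecutive integers is at most
`8`. -/
theorem consecutive_triangles_le_eight (f : Sym2 (ℤ × ℤ) → ℕ) (hf : IsL12 f)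
    (a b : ℤ) :
    {t : Finset (ℤ × ℤ) | IsTriangle t ∧ triangleEdges t ⊆ GS (unitSquare a b) ∧
      ∃ c : ℕ, 1 ≤ c ∧ f '' triangleEdges t = {c - 1, c, c + 1}}.ncard ≤ 8 := by
  classical
  set A : Set (Finset (ℤ × ℤ)) :=
    {t : Finset (ℤ × ℤ) | IsTriangle t ∧ triangleEdges t ⊆ GS (unitSquare a b) ∧
      ∃ c : ℕ, 1 ≤ c ∧ f '' triangleEdges t = {c - 1, c, c + 1}} with hA
  have hB : ∀ p q : ℤ × ℤ, p ≠ q → ∃ x y : Finset (ℤ × ℤ),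
      ∀ t ∈ A, p ∈ t → q ∈ t → t = x ∨ t = y := by
    intro p q hpq
    have hthree : ∀ t1 ∈ {t : Finset (ℤ × ℤ) | t ∈ A ∧ p ∈ t ∧ q ∈ t},
        ∀ t2 ∈ {t : Finset (ℤ × ℤ) | t ∈ A ∧ p ∈ t ∧ q ∈ t},
        ∀ t3 ∈ {t : Finset (ℤ × ℤ) | t ∈ A ∧ p ∈ t ∧ q ∈ t},
        t1 = t2 ∨ t1 = t3 ∨ t2 = t3 := by
      rintro t1 ⟨h1, hp1, hq1⟩ t2 ⟨h2, hp2, hq2⟩ t3 ⟨h3, hp3, hq3⟩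
      exact pair_bound f hf hpq h1.1 h2.1 h3.1 h1.2.2 h2.2.2 h3.2.2 hp1 hq1 hp2 hq2 hp3 hq3
    obtain ⟨x, y, hxy⟩ := no_three_subset_pair hthree
    refine ⟨x, y, fun t ht hpt hqt => ?_⟩
    have := hxy ⟨ht, hpt, hqt⟩
    simpa using this
  obtain ⟨x1, y1, hxy1⟩ := hB (a,b) (a+1,b) (by intro h; rw [Prod.ext_iff] at h; omega)
  obtain ⟨x2, y2, hxy2⟩ := hB (a,b+1) (a+1,b+1) (by intro h; rw [Prod.ext_iff] at h; omega)
  obtain ⟨x3, y3, hxy3⟩ := hB (a,b) (a,b+1) (by intro h; rw [Prod.ext_iff] at h; omega)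
  obtain ⟨x4, y4, hxy4⟩ := hB (a+1,b) (a+1,b+1) (by intro h; rw [Prod.ext_iff] at h; omega)
  have hsub : A ⊆ ({x1,y1,x2,y2,x3,y3,x4,y4} : Set (Finset (ℤ × ℤ))) := by
    intro t ht
    have htA := ht
    obtain ⟨htri, hGSt, hcons⟩ := ht
    obtain ⟨u, v, w, huv, huw, hvw, hteq⟩ := Finset.card_eq_three.mp htri.1
    have hu : u ∈ t := by rw [hteq]; simp
    have hv : v ∈ t := by rw [hteq]; simp
    have hw : w ∈ t := by rw [hteq]; simp
    have edgeS : ∀ x y : ℤ × ℤ, x ∈ t → y ∈ t → x ≠ y →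
        x ∈ unitSquare a b ∨ y ∈ unitSquare a b := by
      intro x y hx hy hxy
      have he : s(x,y) ∈ triangleEdges t := ⟨x, hx, y, hy, hxy, rfl⟩
      obtain ⟨-, z, hzS, hzm⟩ := hGSt he
      rcases Sym2.mem_iff.mp hzm with rfl | rfl
      · exact Or.inl hzS
      · exact Or.inr hzS
    have hadj_wu : T8.Adj w u := htri.2 w hw u hu (Ne.symm huw)
    have hadj_wv : T8.Adj w v := htri.2 w hw v hv (Ne.symm hvw)
    have hadj_vu : T8.Adj v u := htri.2 v hv u hu (Ne.symm huv)
    have hadj_vw : T8.Adj v w := htri.2 v hv w hw hvw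
    have hadj_uv : T8.Adj u v := htri.2 u hu v hv huv
    have hadj_uw : T8.Adj u w := htri.2 u hu w hw huw
    have hcov : ((a,b) ∈ t ∧ (a+1,b) ∈ t) ∨ ((a,b+1) ∈ t ∧ (a+1,b+1) ∈ t) ∨
        ((a,b) ∈ t ∧ (a,b+1) ∈ t) ∨ ((a+1,b) ∈ t ∧ (a+1,b+1) ∈ t) := by
      rcases edgeS u v hu hv huv with h1 | h1
      · rcases edgeS v w hv hw hvw with h2 | h2
        · exact cover_aux hu hv hw huv (Ne.symm huw) (Ne.symm hvw) hadj_wu hadj_wv h1 h2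
        · exact cover_aux hu hw hv huw (Ne.symm huv) hvw hadj_vu hadj_vw h1 h2
      · rcases edgeS u w hu hw huw with h3 | h3
        · exact cover_aux hu hv hw huv (Ne.symm huw) (Ne.symm hvw) hadj_wu hadj_wv h3 h1
        · exact cover_aux hv hw hu hvw huv huw hadj_uv hadj_uw h1 h3
    rcases hcov with ⟨h1, h2⟩ | ⟨h1, h2⟩ | ⟨h1, h2⟩ | ⟨h1, h2⟩
    · rcases hxy1 t htA h1 h2 with rfl | rfl <;> simp
    · rcases hxy2 t htA h1 h2 with rfl | rfl <;> simp
    · rcases hxy3 t htA h1 h2 with rfl | rfl <;> simp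
    · rcases hxy4 t htA h1 h2 with rfl | rfl <;> simp
  have hle := Set.ncard_le_ncard hsub (Set.toFinite _)
  have e1 := Set.ncard_insert_le x1 ({y1,x2,y2,x3,y3,x4,y4} : Set (Finset (ℤ × ℤ)))
  have e2 := Set.ncard_insert_le y1 ({x2,y2,x3,y3,x4,y4} : Set (Finset (ℤ × ℤ)))
  have e3 := Set.ncard_insert_le x2 ({y2,x3,y3,x4,y4} : Set (Finset (ℤ × ℤ)))
  have e4 := Set.ncard_insert_le y2 ({x3,y3,x4,y4} : Set (Finset (ℤ × ℤ)))
  have e5 := Set.ncard_insert_le x3 ({y3,x4,y4} : Set (Finset (ℤ × ℤ)))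
  have e6 := Set.ncard_insert_le y3 ({x4,y4} : Set (Finset (ℤ × ℤ)))
  have e7 := Set.ncard_insert_le x4 ({y4} : Set (Finset (ℤ × ℤ)))
  have e8 := Set.ncard_singleton y4
  omega
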